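/- Let n ≥ 3 and let z = (z₁,…,zₙ) ∈ ℝⁿ satisfy Σᵢ zᵢ = 0 and Σᵢ zᵢ² = n. Then ∫₀^∞ ∫_{-∞}^∞ ∏_{i=1}^n φ(a + b·zᵢ) · b^{n-2} da db = Γ((n-1)/2) / (2 · n^{n/2} · π^{(n-1)/2}), where φ(x) = (2π)^{-1/2} exp(−x²/2) is the standard normal density. -/

import Mathlib

open MeasureTheory
open Real MeasureTheory
theorem const_alg (N : ℝ) (hN : 0 < N) :
    (2*π) ^ (-(N/2)) * (2*π/N) ^ ((1:ℝ)/2) * ((N/2) ^ (-(N-1)/2) * (1/2)) =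
      1 / (2 * N ^ (N/2) * π ^ ((N-1)/2)) := by
  have hπ := pi_pos
  apply Real.log_injOn_pos (by simp [Set.mem_Ioi]; positivity) (by simp [Set.mem_Ioi]; positivity)
  have l1 : ∀ x y : ℝ, 0 < x → 0 < y → log (x * y) = log x + log y :=
    fun x y hx hy => log_mul hx.ne' hy.ne'
  have l2 : ∀ x y : ℝ, 0 < x → 0 < y → log (x / y) = log x - log y :=
    fun x y hx hy => log_div hx.ne' hy.ne'
  rw [l1 _ _ (by positivity) (by positivity), l1 _ _ (by positivity) (by positivity),
      l1 _ _ (by positivity) (by positivity),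
      log_rpow (by positivity), log_rpow (by positivity), log_rpow (by positivity),
      l2 (2*π) N (by positivity) hN, l1 2 π two_pos hπ, l2 N 2 hN two_pos,
      l2 1 _ one_pos (by positivity), log_one,
      l2 1 (2 * N ^ (N/2) * π ^ ((N-1)/2)) one_pos (by positivity), log_one,
      l1 (2 * N ^ (N/2)) (π ^ ((N-1)/2)) (by positivity) (by positivity),
      l1 2 (N ^ (N/2)) two_pos (by positivity),
      log_rpow hN, log_rpow hπ]
  ring


/-- For `n ≥ 3` and a standardized vector `z` (`∑ zᵢ = 0`, `∑ zᵢ² = n`),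
the integrated normal likelihood over location `a` and scale `b > 0` with weight `b^(n-2)`
equals `Γ((n-1)/2) / (2 n^{n/2} π^{(n-1)/2})`, where `φ` is the standard normal density. -/
theorem integrated_normal_likelihood (n : ℕ) (hn : 3 ≤ n) (z : Fin n → ℝ)
    (hz1 : ∑ i, z i = 0) (hz2 : ∑ i, (z i) ^ 2 = (n : ℝ)) :
    (∫ b in Set.Ioi (0 : ℝ), ∫ a : ℝ,
        (∏ i, (Real.sqrt (2 * Real.pi))⁻¹ * Real.exp (-(a + b * z i) ^ 2 / 2)) * b ^ (n - 2))
      = Real.Gamma (((n : ℝ) - 1) / 2) /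
          (2 * (n : ℝ) ^ ((n : ℝ) / 2) * Real.pi ^ (((n : ℝ) - 1) / 2)) := by
  have hπ := pi_pos
  set N : ℝ := (n : ℝ) with hNdef
  have hN3 : (3:ℝ) ≤ N := by rw [hNdef]; exact_mod_cast hn
  have hN : 0 < N := by linarith
  set c : ℝ := (Real.sqrt (2 * π))⁻¹ with hc
  set C : ℝ := c ^ n * Real.sqrt (π / (N/2)) with hC
  -- sum identity
  have hsum : ∀ a b : ℝ, ∑ i, (a + b * z i) ^ 2 = N * a ^ 2 + N * b ^ 2 := by
    intro a b
    have h : ∀ i, (a + b * z i) ^ 2 = a ^ 2 + (2*a*b) * z i + b ^ 2 * (z i) ^ 2 := by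
      intro i; ring
    simp_rw [h]
    rw [Finset.sum_add_distrib, Finset.sum_add_distrib, Finset.sum_const, ← Finset.mul_sum,
        ← Finset.mul_sum, hz1, hz2, Finset.card_univ, Fintype.card_fin, nsmul_eq_mul]
    ring
  -- inner integral
  have h1 : ∀ b : ℝ,
      (∫ a : ℝ, (∏ i, c * Real.exp (-(a + b * z i) ^ 2 / 2)) * b ^ (n - 2))
        = C * (Real.exp (-(N/2) * b ^ 2) * b ^ (n - 2)) := by
    intro b
    have hpt : ∀ a : ℝ, (∏ i, c * Real.exp (-(a + b * z i) ^ 2 / 2)) * b ^ (n - 2)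
        = (c ^ n * (Real.exp (-(N/2) * b ^ 2) * b ^ (n - 2))) * Real.exp (-(N/2) * a ^ 2) := by
      intro a
      rw [Finset.prod_mul_distrib, Finset.prod_const, Finset.card_univ, Fintype.card_fin,
          ← Real.exp_sum]
      have : ∑ i, -(a + b * z i) ^ 2 / 2 = -(N/2) * b ^ 2 + -(N/2) * a ^ 2 := by
        simp_rw [neg_div, Finset.sum_neg_distrib, ← Finset.sum_div, hsum a b]
        ring
      rw [this, Real.exp_add]
      ring
    simp_rw [hpt]
    rw [MeasureTheory.integral_const_mul, integral_gaussian]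
    rw [hC]; ring
  simp_rw [h1]
  rw [MeasureTheory.integral_const_mul]
  -- outer integral
  have h2 : (∫ b in Set.Ioi (0:ℝ), Real.exp (-(N/2) * b ^ 2) * b ^ (n - 2))
      = (N/2) ^ (-(N-1)/2) * (1/2) * Real.Gamma ((N-1)/2) := by
    rw [setIntegral_congr_fun (measurableSet_Ioi)
        (g := fun x : ℝ => x ^ (N - 2) * Real.exp (-(N/2) * x ^ (2:ℝ)))]
    · rw [integral_rpow_mul_exp_neg_mul_rpow two_pos (by linarith) (by positivity),
          show -(N - 2 + 1)/2 = -(N-1)/2 by ring, show (N - 2 + 1)/2 = (N-1)/2 by ring]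
    · intro x hx
      dsimp only
      have hx' : (0:ℝ) < x := hx
      rw [Real.rpow_two, ← Real.rpow_natCast x (n-2)]
      have : ((n - 2 : ℕ) : ℝ) = N - 2 := by
        have : (2:ℕ) ≤ n := by omega
        push_cast [Nat.cast_sub this]
        ring
      rw [this, mul_comm]
  rw [h2]
  -- final algebra
  have hcn : c ^ n = (2*π) ^ (-(N/2)) := by
    rw [hc, Real.sqrt_eq_rpow, ← Real.rpow_neg_one, ← Real.rpow_natCast _ n,
        ← Real.rpow_mul (by positivity), ← Real.rpow_mul (by positivity)]
    congr 1
    ring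
  have hsq : Real.sqrt (π / (N/2)) = (2*π/N) ^ ((1:ℝ)/2) := by
    rw [Real.sqrt_eq_rpow]
    congr 1
    field_simp
  rw [hC, hcn, hsq]
  have := const_alg N hN
  calc (2*π) ^ (-(N/2)) * (2*π/N) ^ ((1:ℝ)/2) * ((N/2) ^ (-(N-1)/2) * (1/2) * Real.Gamma ((N-1)/2))
      = ((2*π) ^ (-(N/2)) * (2*π/N) ^ ((1:ℝ)/2) * ((N/2) ^ (-(N-1)/2) * (1/2))) * Real.Gamma ((N-1)/2) := by ring
    _ = (1 / (2 * N ^ (N/2) * π ^ ((N-1)/2))) * Real.Gamma ((N-1)/2) := by rw [this]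
    _ = Real.Gamma ((N-1)/2) / (2 * N ^ (N/2) * π ^ ((N-1)/2)) := by ring
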